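/- Let A and B be finite based cochain complexes over F_q and let C = A ⊗ B be their tensor product. Then for every integer i, d^i(C) ≥ min over j ∈ ℤ of max{d^j(A), d^{i−j}(B)}, where d^j is taken to be +∞ whenever Z^j \ B^j is empty. -/

import Mathlib

open scoped BigOperators

/-- A (pre-)cochain complex over `F` with a chosen basis at each level: level `i` has
basis set `basis i`, cochain space `basis i → F`, and coboundary map `d i`.  The cochain
condition `d (i+1) ∘ d i = 0` is imposed separately as a hypothesis. -/
structure PreBCC (F : Type) [Field F] : Type 1 where
  basis : ℤ → Type
  d : ∀ i : ℤ, (basis i → F) →ₗ[F] (basis (i + 1) → F)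

namespace PreBCC

variable {F : Type} [Field F]

/-- The set of `i`-cocycles. -/
def cocycles (C : PreBCC F) (i : ℤ) : Set (C.basis i → F) := {f | C.d i f = 0}

/-- The set of `i`-coboundaries. -/
def cobounds (C : PreBCC F) (i : ℤ) : Set (C.basis i → F) :=
  {f | ∃ g : C.basis (i - 1) → F, ∀ x : C.basis i,
      f x = C.d (i - 1) g (cast (congrArg C.basis (show i = i - 1 + 1 by omega)) x)}

/-- The Hamming weight (in `ℕ∞`) of a cochain: the number of nonzero coordinates. -/
noncomputable def wt {α : Type} (f : α → F) : ℕ∞ := Set.encard {x | f x ≠ 0}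

/-- The `i`-cosystolic distance: the minimum Hamming weight of an element of
`Z^i \ B^i`, equal to `⊤` when this set is empty. -/
noncomputable def dcosys (C : PreBCC F) (i : ℤ) : ℕ∞ :=
  sInf (wt '' (C.cocycles i \ C.cobounds i))

/-- The tensor product of two based (pre-)cochain complexes: level `i` has basis
`⊔_j A(j) × B(i-j)`, and the coboundary is `⊕_j (δ^A_j ⊗ I + (-1)^j I ⊗ δ^B_{i-j})`. -/
noncomputable def tensor (A B : PreBCC F) : PreBCC F where
  basis i := Σ j : ℤ, A.basis j × B.basis (i - j)
  d i := LinearMap.pi fun x : Σ j : ℤ, A.basis j × B.basis (i + 1 - j) =>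
    (LinearMap.proj (cast (congrArg A.basis (show x.1 = x.1 - 1 + 1 by omega)) x.2.1)).comp
        ((A.d (x.1 - 1)).comp (LinearMap.funLeft F F
          (fun a' : A.basis (x.1 - 1) =>
            (⟨x.1 - 1, a',
              cast (congrArg B.basis (show i + 1 - x.1 = i - (x.1 - 1) by omega)) x.2.2⟩ :
              Σ j : ℤ, A.basis j × B.basis (i - j)))))
      + ((-1 : F) ^ x.1) •
        ((LinearMap.proj
            (cast (congrArg B.basis (show i + 1 - x.1 = i - x.1 + 1 by omega)) x.2.2)).comp
          ((B.d (i - x.1)).comp (LinearMap.funLeft F F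
            (fun b' : B.basis (i - x.1) =>
              (⟨x.1, x.2.1, b'⟩ : Σ j : ℤ, A.basis j × B.basis (i - j))))))

end PreBCC

set_option maxHeartbeats 1000000
set_option synthInstance.maxHeartbeats 400000

namespace Stmt7Aux

variable {F : Type} [Field F]

/-- transport of cochains along an equality of levels -/
def trE (C : PreBCC F) {m m' : ℤ} (h : m = m') : (C.basis m → F) →ₗ[F] (C.basis m' → F) :=
  LinearMap.funLeft F F (cast (congrArg C.basis h.symm))

lemma trE_apply (C : PreBCC F) {m m' : ℤ} (h : m = m') (g : C.basis m → F) (x : C.basis m') :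
    trE C h g x = g (cast (congrArg C.basis h.symm) x) := rfl

@[simp] lemma trE_refl (C : PreBCC F) {m : ℤ} (h : m = m) (g : C.basis m → F) :
    trE C h g = g := rfl

lemma trE_trE (C : PreBCC F) {m m' m'' : ℤ} (h : m = m') (h' : m' = m'') (g : C.basis m → F) :
    trE C h' (trE C h g) = trE C (h.trans h') g := by subst h h'; rfl

@[simp] lemma cast_triv {α : Type} (h : α = α) (a : α) : cast h a = a := rfl

lemma d_cast (C : PreBCC F) {m m' : ℤ} (h : m = m') (g : C.basis m → F) :
    trE C (show m + 1 = m' + 1 by omega) (C.d m g) = C.d m' (trE C h g) := by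
  subst h; rfl

end Stmt7Aux

namespace Stmt7Aux
variable {F : Type} [Field F]

lemma tensor_d_apply (A B : PreBCC F) (n : ℤ) (f : (A.tensor B).basis n → F) (j : ℤ)
    (a : A.basis j) (b : B.basis (n + 1 - j)) :
    (A.tensor B).d n f ⟨j, a, b⟩ =
      A.d (j - 1) (fun a' => f ⟨j - 1, a',
          cast (congrArg B.basis (show n + 1 - j = n - (j-1) by omega)) b⟩)
        (cast (congrArg A.basis (show j = j - 1 + 1 by omega)) a)
      + (-1 : F) ^ j * B.d (n - j) (fun b' => f ⟨j, a, b'⟩)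
        (cast (congrArg B.basis (show n + 1 - j = n - j + 1 by omega)) b) := rfl

lemma f_shift (A B : PreBCC F) (n : ℤ) (f : (A.tensor B).basis n → F) {j j' : ℤ} (h : j = j')
    (a : A.basis j) (b : B.basis (n - j)) :
    f ⟨j, a, b⟩ = f ⟨j', cast (congrArg A.basis h) a,
      cast (congrArg B.basis (show n - j = n - j' by omega)) b⟩ := by
  subst h; rfl

/-- expansion of a linear functional on a finite function space -/
lemma FE {X : Type} [Fintype X] [DecidableEq X] (φ : (X → F) →ₗ[F] F) (v : X → F) :
    φ v = ∑ x, v x * φ (Pi.single x 1) := by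
  have hv : v = ∑ x, v x • (Pi.single x (1:F) : X → F) := by
    funext y
    simp [Finset.sum_apply, Pi.single_apply]
  nth_rewrite 1 [hv]
  rw [map_sum]
  simp [smul_eq_mul]

lemma INT {X Y : Type} [Fintype X] [Fintype Y] (φ : (X → F) →ₗ[F] F) (ψ : (Y → F) →ₗ[F] F)
    (M : X → Y → F) : φ (fun x => ψ (M x)) = ψ (fun y => φ (fun x => M x y)) := by
  classical
  calc φ (fun x => ψ (M x)) = ∑ x, ψ (M x) * φ (Pi.single x 1) := FE _ _
    _ = ∑ x, (∑ y, M x y * ψ (Pi.single y 1)) * φ (Pi.single x 1) := by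
        refine Finset.sum_congr rfl fun x _ => ?_
        rw [← FE ψ (M x)]
    _ = ∑ x, ∑ y, M x y * ψ (Pi.single y 1) * φ (Pi.single x 1) := by
        simp [Finset.sum_mul]
    _ = ∑ y, ∑ x, M x y * ψ (Pi.single y 1) * φ (Pi.single x 1) := Finset.sum_comm
    _ = ∑ y, (∑ x, M x y * φ (Pi.single x 1)) * ψ (Pi.single y 1) := by
        refine Finset.sum_congr rfl fun y _ => ?_
        rw [Finset.sum_mul]
        refine Finset.sum_congr rfl fun x _ => ?_
        ring
    _ = ∑ y, φ (fun x => M x y) * ψ (Pi.single y 1) := by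
        refine Finset.sum_congr rfl fun y _ => ?_
        rw [← FE φ (fun x => M x y)]
    _ = ψ (fun y => φ (fun x => M x y)) := (FE _ _).symm

/-- sum with explicit instance -/
def fsum {X : Type} (inst : Fintype X) (g : X → F) : F := (@Finset.univ X inst).sum g

lemma fsum_eq {X : Type} (inst : Fintype X) [inst' : Fintype X] (g : X → F) :
    fsum inst g = ∑ x, g x := by
  have h : inst = inst' := Subsingleton.elim _ _
  subst h
  rfl

/-- double annihilator for finite-dimensional function spaces -/
lemma DA {Y : Type} (inst : Fintype Y) (W : Submodule F (Y → F)) (r : Y → F)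
    (h : ∀ z : Y → F, (∀ u ∈ W, fsum inst (fun y => u y * z y) = 0) →
      fsum inst (fun y => r y * z y) = 0) : r ∈ W := by
  classical
  letI := inst
  simp only [fsum_eq] at h
  by_contra hr
  have hq : W.mkQ r ≠ 0 := by
    simpa [Submodule.Quotient.mk_eq_zero] using hr
  obtain ⟨φ, hφ⟩ : ∃ φ : Module.Dual F ((Y → F) ⧸ W), φ (W.mkQ r) ≠ 0 := by
    by_contra hc
    push_neg at hc
    exact hq ((Module.forall_dual_apply_eq_zero_iff F _).mp hc)
  set ψ : (Y → F) →ₗ[F] F := φ.comp W.mkQ with hψ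
  set z : Y → F := fun y => ψ (Pi.single y 1) with hz
  have hzann : ∀ u ∈ W, ∑ y, u y * z y = 0 := by
    intro u hu
    rw [← FE ψ u]
    simp [hψ, Submodule.Quotient.mk_eq_zero, (Submodule.Quotient.mk_eq_zero W).mpr hu]
  have := h z hzann
  rw [← FE ψ r] at this
  exact hφ this

end Stmt7Aux

namespace Stmt7Aux2
open Stmt7Aux
variable {F : Type} [Field F]

lemma hodge (C : PreBCC F) (hdd : ∀ (j : ℤ) (f : C.basis j → F), C.d (j+1) (C.d j f) = 0) :
    ∃ (π : ∀ j : ℤ, (C.basis (j+1) → F) →ₗ[F] (C.basis (j+1) → F))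
      (σ : ∀ j : ℤ, (C.basis (j+1) → F) →ₗ[F] (C.basis j → F)),
      (∀ (j : ℤ) (v : C.basis (j+1) → F),
        v = C.d j (σ j v) + σ (j+1) (C.d (j+1) v) + π j v) ∧
      (∀ (j : ℤ) (v : C.basis (j+1) → F), C.d (j+1) (π j v) = 0) ∧
      (∀ (j : ℤ) (v : C.basis (j+1) → F), π j (π j v) = π j v) ∧
      (∀ (j : ℤ) (g : C.basis j → F), π j (C.d j g) = 0) := by
  classical
  choose U hU using fun k : ℤ => (LinearMap.ker (C.d k)).exists_isCompl
  choose Q hQ using fun j : ℤ => (LinearMap.range (C.d j)).exists_isCompl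
  have hsec0 : ∀ j : ℤ, ∃ s : ↥(LinearMap.range (C.d j)) →ₗ[F] (C.basis j → F),
      ∀ y : ↥(LinearMap.range (C.d j)), C.d j (s y) = (y : C.basis (j+1) → F) := by
    intro j
    obtain ⟨s, hs⟩ := (C.d j).rangeRestrict.exists_rightInverse_of_surjective
      (C.d j).range_rangeRestrict
    exact ⟨s, fun y => by
      have := congrArg Subtype.val (LinearMap.congr_fun hs y)
      simpa using this⟩
  choose sec hsec using hsec0
  let prZ : ∀ k : ℤ, (C.basis k → F) →ₗ[F] (C.basis k → F) := fun k =>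
    (LinearMap.ker (C.d k)).subtype ∘ₗ Submodule.projectionOnto _ _ (hU k)
  let prQ : ∀ j : ℤ, (C.basis (j+1) → F) →ₗ[F] (C.basis (j+1) → F) := fun j =>
    (Q j).subtype ∘ₗ Submodule.projectionOnto _ _ (hQ j).symm
  have cZ1 : ∀ (k : ℤ) v, prZ k v ∈ LinearMap.ker (C.d k) := fun k v => Submodule.coe_mem _
  have cZ2 : ∀ (k : ℤ) v, v ∈ LinearMap.ker (C.d k) → prZ k v = v := by
    intro k v hv
    show ((Submodule.projectionOnto _ _ (hU k) v : _) : C.basis k → F) = v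
    rw [show v = ((⟨v, hv⟩ : ↥(LinearMap.ker (C.d k))) : C.basis k → F) from rfl,
      Submodule.projectionOnto_apply_left (hU k)]
  have cZ3 : ∀ (k : ℤ) v, v - prZ k v ∈ U k := by
    intro k v
    have h : prZ k v + (((U k).projectionOnto _ (hU k).symm v : _) : C.basis k → F) = v :=
      Submodule.projection_add_projection_eq_self (hU k) v
    have : v - prZ k v = (((U k).projectionOnto _ (hU k).symm v : _) : C.basis k → F) :=
      sub_eq_of_eq_add' h.symm
    rw [this]; exact Submodule.coe_mem _
  have cQ1 : ∀ (j : ℤ) w, prQ j w ∈ Q j := fun j w => Submodule.coe_mem _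
  have cQ2 : ∀ (j : ℤ) w, w ∈ Q j → prQ j w = w := by
    intro j w hw
    show ((Submodule.projectionOnto _ _ (hQ j).symm w : _) : C.basis (j+1) → F) = w
    rw [show w = ((⟨w, hw⟩ : ↥(Q j)) : C.basis (j+1) → F) from rfl,
      Submodule.projectionOnto_apply_left (hQ j).symm]
  have cQ3 : ∀ (j : ℤ) w, w - prQ j w ∈ LinearMap.range (C.d j) := by
    intro j w
    have h : (((LinearMap.range (C.d j)).projectionOnto _ (hQ j) w : _)
        : C.basis (j+1) → F) + prQ j w = w :=
      Submodule.projection_add_projection_eq_self (hQ j) w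
    have : w - prQ j w = (((LinearMap.range (C.d j)).projectionOnto _ (hQ j) w : _)
        : C.basis (j+1) → F) := sub_eq_of_eq_add h.symm
    rw [this]; exact Submodule.coe_mem _
  have cQ4 : ∀ (j : ℤ) w, w ∈ LinearMap.range (C.d j) → prQ j w = 0 := by
    intro j w hw
    show ((Submodule.projectionOnto _ _ (hQ j).symm w : _) : C.basis (j+1) → F) = 0
    rw [Submodule.projectionOnto_apply_of_mem_right (hQ j).symm hw]; rfl
  have hrk : ∀ (j : ℤ) w, w ∈ LinearMap.range (C.d j) → w ∈ LinearMap.ker (C.d (j+1)) := by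
    rintro j w ⟨g, rfl⟩; exact hdd j g
  -- the projection π and homotopy σ
  set π : ∀ j : ℤ, (C.basis (j+1) → F) →ₗ[F] (C.basis (j+1) → F) :=
    fun j => prQ j ∘ₗ prZ (j+1) with hπdef
  have hπ_app : ∀ (j : ℤ) v, π j v = prQ j (prZ (j+1) v) := fun j v => rfl
  have hβmem : ∀ (j : ℤ) (v : C.basis (j+1) → F),
      prZ (j+1) v - π j v ∈ LinearMap.range (C.d j) := by
    intro j v; rw [hπ_app]; exact cQ3 j _
  set σ : ∀ j : ℤ, (C.basis (j+1) → F) →ₗ[F] (C.basis j → F) :=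
    fun j => (LinearMap.id - prZ j) ∘ₗ sec j ∘ₗ
      LinearMap.codRestrict _ (prZ (j+1) - π j) (hβmem j) with hσdef
  have hσ_app : ∀ (j : ℤ) v, σ j v = sec j ⟨prZ (j+1) v - π j v, hβmem j v⟩
      - prZ j (sec j ⟨prZ (j+1) v - π j v, hβmem j v⟩) := fun j v => rfl
  -- properties
  have P6 : ∀ (j : ℤ) (g : C.basis j → F), π j (C.d j g) = 0 := by
    intro j g
    rw [hπ_app, cZ2 _ _ (hrk j _ ⟨g, rfl⟩), cQ4 _ _ ⟨g, rfl⟩]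
  have P2 : ∀ (j : ℤ) v, π j v ∈ LinearMap.ker (C.d (j+1)) := by
    intro j v
    have h1 : prZ (j+1) v - π j v ∈ LinearMap.ker (C.d (j+1)) := hrk j _ (hβmem j v)
    have : π j v = prZ (j+1) v - (prZ (j+1) v - π j v) := by abel
    rw [this]
    exact Submodule.sub_mem _ (cZ1 _ _) h1
  have P5 : ∀ (j : ℤ) v, π j (π j v) = π j v := by
    intro j v
    rw [hπ_app j (π j v), cZ2 _ _ (P2 j v), hπ_app, cQ2 j _ (cQ1 j _)]
  have P1 : ∀ (j : ℤ) (v : C.basis (j+1) → F),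
      v = C.d j (σ j v) + σ (j+1) (C.d (j+1) v) + π j v := by
    intro j v
    have hdσ : C.d j (σ j v) = prZ (j+1) v - π j v := by
      rw [hσ_app, map_sub, hsec j, LinearMap.mem_ker.mp (cZ1 j _), sub_zero]
    set w : C.basis (j+1+1) → F := C.d (j+1) v with hw
    have hwker : w ∈ LinearMap.ker (C.d (j+1+1)) := hdd (j+1) v
    have hβw : prZ (j+1+1) w - π (j+1) w = w := by
      rw [cZ2 _ _ hwker, P6 (j+1) v, sub_zero]
    set t : C.basis (j+1) → F := sec (j+1) ⟨prZ (j+1+1) w - π (j+1) w, hβmem (j+1) w⟩ with ht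
    have hσw : σ (j+1) w = t - prZ (j+1) t := hσ_app (j+1) w
    have hdt : C.d (j+1) t = w := by
      rw [ht, hsec (j+1)]
      exact hβw
    have h1 : v - prZ (j+1) v ∈ U (j+1) := cZ3 _ _
    have h2 : t - prZ (j+1) t ∈ U (j+1) := cZ3 _ _
    have h3 : v - prZ (j+1) v - (t - prZ (j+1) t) ∈ LinearMap.ker (C.d (j+1)) := by
      rw [LinearMap.mem_ker, map_sub, map_sub, map_sub, hdt,
        LinearMap.mem_ker.mp (cZ1 _ v), LinearMap.mem_ker.mp (cZ1 _ t)]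
      simp [hw]
    have h4 : v - prZ (j+1) v - (t - prZ (j+1) t) = 0 :=
      Submodule.disjoint_def.mp (hU (j+1)).disjoint _ h3
        (Submodule.sub_mem _ h1 h2)
    have h5 : v - prZ (j+1) v = t - prZ (j+1) t := sub_eq_zero.mp h4
    rw [hdσ, hσw, ← h5]
    abel
  exact ⟨π, σ, P1, fun j v => LinearMap.mem_ker.mp (P2 j v), P5, P6⟩

end Stmt7Aux2

namespace Stmt7Aux3
open Stmt7Aux Stmt7Aux2
variable {F : Type} [Field F]

variable (C : PreBCC F) (hdd : ∀ (j : ℤ) (f : C.basis j → F), C.d (j+1) (C.d j f) = 0)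

noncomputable def hpi : ∀ j : ℤ, (C.basis (j+1) → F) →ₗ[F] (C.basis (j+1) → F) :=
  (hodge C hdd).choose

noncomputable def hsig : ∀ j : ℤ, (C.basis (j+1) → F) →ₗ[F] (C.basis j → F) :=
  (hodge C hdd).choose_spec.choose

lemma hspec : (∀ (j : ℤ) (v : C.basis (j+1) → F),
      v = C.d j (hsig C hdd j v) + hsig C hdd (j+1) (C.d (j+1) v) + hpi C hdd j v) ∧
    (∀ (j : ℤ) (v : C.basis (j+1) → F), C.d (j+1) (hpi C hdd j v) = 0) ∧
    (∀ (j : ℤ) (v : C.basis (j+1) → F), hpi C hdd j (hpi C hdd j v) = hpi C hdd j v) ∧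
    (∀ (j : ℤ) (g : C.basis j → F), hpi C hdd j (C.d j g) = 0) :=
  (hodge C hdd).choose_spec.choose_spec

/-- transported harmonic projection at level `j` -/
noncomputable def Pj (j : ℤ) : (C.basis j → F) →ₗ[F] (C.basis j → F) :=
  trE C (show j - 1 + 1 = j by omega) ∘ₗ hpi C hdd (j-1) ∘ₗ trE C (show j = j - 1 + 1 by omega)

lemma fam_congr_sig (σ : ∀ k : ℤ, (C.basis (k+1) → F) →ₗ[F] (C.basis k → F)) {m m' : ℤ}
    (h : m = m') (u : C.basis (m'+1) → F) :
    trE C h (σ m (trE C (show m'+1 = m+1 by omega) u)) = σ m' u := by subst h; rfl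

lemma Pj_cob (j : ℤ) (g : C.basis (j-1) → F) :
    Pj C hdd j (trE C (show j - 1 + 1 = j by omega) (C.d (j-1) g)) = 0 := by
  show trE C (show j - 1 + 1 = j by omega) (hpi C hdd (j-1)
    (trE C (show j = j - 1 + 1 by omega) (trE C (show j - 1 + 1 = j by omega) (C.d (j-1) g)))) = 0
  rw [trE_trE, trE_refl, (hspec C hdd).2.2.2, map_zero]

lemma Pj_d (j : ℤ) (v : C.basis j → F) : C.d j (Pj C hdd j v) = 0 := by
  show C.d j (trE C (show j - 1 + 1 = j by omega) (hpi C hdd (j-1)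
    (trE C (show j = j - 1 + 1 by omega) v))) = 0
  rw [← d_cast C (show j - 1 + 1 = j by omega), (hspec C hdd).2.1, map_zero]

lemma Pj_idem (j : ℤ) (v : C.basis j → F) : Pj C hdd j (Pj C hdd j v) = Pj C hdd j v := by
  show trE C (show j - 1 + 1 = j by omega) (hpi C hdd (j-1) (trE C (show j = j - 1 + 1 by omega)
      (trE C (show j - 1 + 1 = j by omega) (hpi C hdd (j-1)
        (trE C (show j = j - 1 + 1 by omega) v))))) =
    trE C (show j - 1 + 1 = j by omega) (hpi C hdd (j-1) (trE C (show j = j - 1 + 1 by omega) v))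
  rw [trE_trE, trE_refl, (hspec C hdd).2.2.1]

lemma Pj_identity (j : ℤ) (v : C.basis j → F) :
    v = trE C (show j - 1 + 1 = j by omega)
          (C.d (j-1) (hsig C hdd (j-1) (trE C (show j = j - 1 + 1 by omega) v)))
        + hsig C hdd j (C.d j v) + Pj C hdd j v := by
  have h := (hspec C hdd).1 (j-1) (trE C (show j = j - 1 + 1 by omega) v)
  have h2 := congrArg (trE C (show j - 1 + 1 = j by omega)) h
  rw [map_add, map_add] at h2
  rw [trE_trE, trE_refl] at h2
  have h3 : C.d (j-1+1) (trE C (show j = j - 1 + 1 by omega) v)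
      = trE C (show j + 1 = j - 1 + 1 + 1 by omega) (C.d j v) := by
    rw [d_cast C (show j = j - 1 + 1 by omega)]
  rw [h3, fam_congr_sig C (hsig C hdd) (show j - 1 + 1 = j by omega) (C.d j v)] at h2
  exact h2

/-- coboundary submodule at level `n`, with flexible witness level -/
def Cb (n : ℤ) : Submodule F (C.basis n → F) where
  carrier := {u | ∃ (m : ℤ) (hm : n = m + 1) (g : C.basis m → F),
    u = fun y => C.d m g (cast (congrArg C.basis hm) y)}
  add_mem' := by
    rintro u v ⟨m, hm, g, rfl⟩ ⟨m', hm', g', rfl⟩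
    obtain rfl : m' = m := by omega
    exact ⟨_, hm, g + g', funext fun y => by rw [map_add]; rfl⟩
  zero_mem' := ⟨n-1, by omega, 0, by
    funext y
    rw [map_zero]
    rfl⟩
  smul_mem' := by
    rintro t u ⟨m, hm, g, rfl⟩
    exact ⟨m, hm, t • g, funext fun y => by rw [map_smul]; rfl⟩

lemma cobounds_iff (n : ℤ) (f : C.basis n → F) : f ∈ C.cobounds n ↔ f ∈ Cb C n := by
  constructor
  · rintro ⟨g, hg⟩
    exact ⟨n-1, by omega, g, funext fun x => hg x⟩
  · rintro ⟨m, hm, g, rfl⟩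
    have hmm : m = n - 1 := by omega
    subst hmm
    exact ⟨g, fun x => rfl⟩

lemma Pj_cob' (j : ℤ) {m : ℤ} (hm : j = m + 1) (g : C.basis m → F) :
    Pj C hdd j (fun y => C.d m g (cast (congrArg C.basis hm) y)) = 0 := by
  rw [show (fun y => C.d m g (cast (congrArg C.basis hm) y))
    = trE C hm.symm (C.d m g) from rfl]
  subst hm
  rw [trE_refl]
  show trE C (show m+1-1+1 = m+1 by omega)
    (hpi C hdd (m+1-1) (trE C (show m+1 = m+1-1+1 by omega) (C.d m g))) = 0
  rw [show trE C (show m+1 = m+1-1+1 by omega) (C.d m g)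
      = C.d (m+1-1) (trE C (show m = m+1-1 by omega) g) from
      d_cast C (show m = m+1-1 by omega) g]
  rw [(hspec C hdd).2.2.2, map_zero]

lemma Pj_kills (j : ℤ) (v : C.basis j → F) (hv : Pj C hdd j v ∈ Cb C j) :
    Pj C hdd j v = 0 := by
  obtain ⟨m, hm, g, hg⟩ := hv
  have : Pj C hdd j (Pj C hdd j v) = 0 := by
    rw [hg]
    exact Pj_cob' C hdd j hm g
  rw [Pj_idem] at this
  exact this

end Stmt7Aux3

namespace Stmt7T
open Stmt7Aux Stmt7Aux2 Stmt7Aux3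

variable {F : Type} [Field F]

variable (A B : PreBCC F)

lemma dA_shiftgen {m m' : ℤ} (h : m = m') (G : A.basis m → F) (G' : A.basis m' → F)
    (hG : ∀ a' : A.basis m, G a' = G' (cast (congrArg A.basis h) a')) (x : A.basis (m'+1)) :
    A.d m G (cast (congrArg A.basis (show m'+1 = m+1 by omega)) x) = A.d m' G' x := by
  subst h
  exact congrFun (congrArg (A.d m) (funext fun a' => hG a')) x

lemma dB_shiftgen {m m' : ℤ} (h : m = m') (G : B.basis m → F) (G' : B.basis m' → F)
    (hG : ∀ y : B.basis m', G' y = G (cast (congrArg B.basis h.symm) y)) {s : ℤ} (hs : s = m+1)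
    (x : B.basis s) :
    B.d m G (cast (congrArg B.basis hs) x)
      = B.d m' G' (cast (congrArg B.basis (show s = m'+1 by omega)) x) := by
  subst h
  subst hs
  exact congrFun (congrArg (B.d m) (funext fun y => (hG y).symm)) x

variable (i : ℤ)

/-- column of a tensor cochain -/
def colf (f : (A.tensor B).basis i → F) (j : ℤ) (b : B.basis (i - j)) : A.basis j → F :=
  fun a => f ⟨j, a, b⟩

lemma sign_flip (j : ℤ) : (-1:F)^(j+1) = -(-1:F)^j := by
  rw [zpow_add_one₀ (by norm_num : (-1:F) ≠ 0)]
  ring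

/-- first normalized cocycle equation -/
lemma CC1 (f : (A.tensor B).basis i → F) (hf : (A.tensor B).d i f = 0) (j : ℤ)
    (a : A.basis (j+1)) (b : B.basis (i-j)) :
    A.d j (fun a' => f ⟨j, a', b⟩) a =
      (-1:F)^j * B.d (i-j-1)
        (fun b' => f ⟨j+1, a, cast (congrArg B.basis (show i-j-1 = i-(j+1) by omega)) b'⟩)
        (cast (congrArg B.basis (show i-j = i-j-1+1 by omega)) b) := by
  have h0 := congrFun hf ⟨j+1, a, cast (congrArg B.basis (show i-j = i+1-(j+1) by omega)) b⟩
  rw [tensor_d_apply] at h0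
  change _ = (0:F) at h0
  simp only [cast_cast] at h0
  rw [dA_shiftgen A (show j+1-1 = j by omega)
      (G' := fun a' => f ⟨j, a', b⟩)
      (hG := fun a' => by
        rw [f_shift A B i f (show j+1-1 = j by omega)]
        simp only [cast_cast, cast_triv]) (x := a)] at h0
  rw [dB_shiftgen B (show i-(j+1) = i-j-1 by omega)
      (G' := fun b' => f ⟨j+1, a, cast (congrArg B.basis (show i-j-1 = i-(j+1) by omega)) b'⟩)
      (hG := fun y => rfl) (hs := show i-j = i-(j+1)+1 by omega) (x := b)] at h0
  rw [sign_flip] at h0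
  linear_combination h0

/-- second normalized cocycle equation -/
lemma CC2 (f : (A.tensor B).basis i → F) (hf : (A.tensor B).d i f = 0) (j : ℤ)
    (x : A.basis j) (y : B.basis (i-j+1)) :
    (-1:F)^j * B.d (i-j) (fun b' => f ⟨j, x, b'⟩) y
      = - A.d (j-1)
          (fun a' => f ⟨j-1, a', cast (congrArg B.basis (show i-j+1 = i-(j-1) by omega)) y⟩)
          (cast (congrArg A.basis (show j = j-1+1 by omega)) x) := by
  have h0 := congrFun hf ⟨j, x, cast (congrArg B.basis (show i-j+1 = i+1-j by omega)) y⟩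
  rw [tensor_d_apply] at h0
  change _ = (0:F) at h0
  simp only [cast_cast, cast_triv] at h0
  linear_combination h0

variable (iA : ∀ k : ℤ, Fintype (A.basis k)) (iB : ∀ k : ℤ, Fintype (B.basis k))

noncomputable def ctrR (f : (A.tensor B).basis i → F) (j : ℤ) (z : B.basis (i-j) → F) :
    A.basis j → F :=
  fun a => fsum (iB (i-j)) (fun y => f ⟨j, a, y⟩ * z y)

noncomputable def ctrL (f : (A.tensor B).basis i → F) (j : ℤ) (w : A.basis j → F) :
    B.basis (i-j) → F :=
  fun y => fsum (iA j) (fun x => w x * f ⟨j, x, y⟩)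

def annB (j : ℤ) : Set (B.basis (i-j) → F) :=
  {z | ∀ u ∈ Cb B (i-j), fsum (iB (i-j)) (fun y => u y * z y) = 0}

def annA (j : ℤ) : Set (A.basis j → F) :=
  {w | ∀ u ∈ Cb A j, fsum (iA j) (fun x => u x * w x) = 0}

lemma ctrR_eq (f : (A.tensor B).basis i → F) (j : ℤ) (z : B.basis (i-j) → F) :
    ctrR A B i iB f j z = (letI := iB (i-j); ∑ y, z y • (colf A B i f j y)) := by
  letI := iB (i-j)
  funext a
  rw [ctrR, fsum_eq, Finset.sum_apply]
  refine Finset.sum_congr rfl fun y _ => ?_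
  simp only [Pi.smul_apply, smul_eq_mul, colf]
  ring

lemma ctrL_eq (f : (A.tensor B).basis i → F) (j : ℤ) (w : A.basis j → F) :
    ctrL A B i iA f j w = (letI := iA j; ∑ x, w x • (fun y => f ⟨j, x, y⟩)) := by
  letI := iA j
  funext y
  rw [ctrL, fsum_eq, Finset.sum_apply]
  rfl

lemma ctrR_cocycle (f : (A.tensor B).basis i → F) (hf : (A.tensor B).d i f = 0) (j : ℤ)
    (z : B.basis (i-j) → F) (hz : z ∈ annB B i iB j) :
    A.d j (ctrR A B i iB f j z) = 0 := by
  letI := iB (i-j)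
  funext a
  rw [ctrR_eq, map_sum, Finset.sum_apply, Pi.zero_apply]
  have hterm : ∀ y : B.basis (i-j), A.d j (z y • colf A B i f j y) a
      = (-1:F)^j * ((fun yy => B.d (i-j-1)
          (fun b' => f ⟨j+1, a, cast (congrArg B.basis (show i-j-1 = i-(j+1) by omega)) b'⟩)
          (cast (congrArg B.basis (show i-j = i-j-1+1 by omega)) yy)) y * z y) := by
    intro y
    rw [map_smul]
    simp only [Pi.smul_apply, smul_eq_mul]
    rw [show A.d j (colf A B i f j y) a = A.d j (fun a' => f ⟨j, a', y⟩) a from rfl,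
      CC1 A B i f hf j a y]
    ring
  rw [Finset.sum_congr rfl (fun y _ => hterm y), ← Finset.mul_sum]
  have hu : (fun yy => B.d (i-j-1)
      (fun b' => f ⟨j+1, a, cast (congrArg B.basis (show i-j-1 = i-(j+1) by omega)) b'⟩)
      (cast (congrArg B.basis (show i-j = i-j-1+1 by omega)) yy)) ∈ Cb B (i-j) :=
    ⟨i-j-1, by omega,
      fun b' => f ⟨j+1, a, cast (congrArg B.basis (show i-j-1 = i-(j+1) by omega)) b'⟩, rfl⟩
  have := hz _ hu
  rw [fsum_eq] at this
  rw [this, mul_zero]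

lemma ctrL_cocycle (f : (A.tensor B).basis i → F) (hf : (A.tensor B).d i f = 0) (j : ℤ)
    (w : A.basis j → F) (hw : w ∈ annA A iA j) :
    B.d (i-j) (ctrL A B i iA f j w) = 0 := by
  letI := iA j
  funext y'
  rw [ctrL_eq, map_sum, Finset.sum_apply, Pi.zero_apply]
  have hne : ((-1:F)^j) ≠ 0 := zpow_ne_zero _ (by norm_num)
  apply mul_left_cancel₀ hne
  rw [mul_zero, Finset.mul_sum]
  have hterm : ∀ x : A.basis j, (-1:F)^j * B.d (i-j) (w x • fun y => f ⟨j, x, y⟩) y'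
      = -((fun xx => A.d (j-1)
          (fun a' => f ⟨j-1, a', cast (congrArg B.basis (show i-j+1 = i-(j-1) by omega)) y'⟩)
          (cast (congrArg A.basis (show j = j-1+1 by omega)) xx)) x * w x) := by
    intro x
    rw [map_smul]
    simp only [Pi.smul_apply, smul_eq_mul]
    have h := CC2 A B i f hf j x y'
    linear_combination w x * h
  rw [Finset.sum_congr rfl (fun x _ => hterm x)]
  have hu : (fun xx => A.d (j-1)
      (fun a' => f ⟨j-1, a', cast (congrArg B.basis (show i-j+1 = i-(j-1) by omega)) y'⟩)
      (cast (congrArg A.basis (show j = j-1+1 by omega)) xx)) ∈ Cb A j :=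
    ⟨j-1, by omega,
      fun a' => f ⟨j-1, a', cast (congrArg B.basis (show i-j+1 = i-(j-1) by omega)) y'⟩, rfl⟩
  have h0 := hw _ hu
  rw [fsum_eq] at h0
  simp only [Finset.sum_neg_distrib]
  rw [h0, neg_zero]

variable (hddA : ∀ (j : ℤ) (g : A.basis j → F), A.d (j+1) (A.d j g) = 0)

/-- the contracting-homotopy cochain -/
noncomputable def Kf (f : (A.tensor B).basis i → F) : (A.tensor B).basis (i-1) → F :=
  fun x => hsig A hddA x.1
    (fun a' : A.basis (x.1+1) => f ⟨x.1+1, a',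
      cast (congrArg B.basis (show i-1-x.1 = i-(x.1+1) by omega)) x.2.2⟩) x.2.1

lemma h2gen (C' : PreBCC F) {X : Type} (instX : Fintype X) (φ : (X → F) →ₗ[F] F)
    {m m' t s : ℤ} (instm : Fintype (C'.basis m')) (hmm' : m = m') (ht : m' = t) (hs : s = m' + 1)
    (N : X → C'.basis t → F) (b : C'.basis s) :
    φ (fun x => C'.d m' (fun y => N x (cast (congrArg C'.basis ht) y))
        (cast (congrArg C'.basis hs) b))
      = C'.d m (fun y' => φ (fun x => N x (cast (congrArg C'.basis (hmm'.trans ht)) y')))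
          (cast (congrArg C'.basis (show s = m + 1 by omega)) b) := by
  subst hmm'
  subst ht
  subst hs
  letI := instX
  letI := instm
  exact INT φ ((LinearMap.proj b).comp (C'.d m)) N

include iA iB in
/-- main homotopy identity, componentwise -/
lemma ML (f : (A.tensor B).basis i → F) (hf : (A.tensor B).d i f = 0) (j : ℤ)
    (a : A.basis j) (b : B.basis (i-j)) :
    f ⟨j, a, b⟩ = (A.tensor B).d (i-1) (Kf A B i hddA f)
        ⟨j, a, cast (congrArg B.basis (show i-j = i-1+1-j by omega)) b⟩
      + Pj A hddA j (colf A B i f j b) a := by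
  rw [tensor_d_apply]
  simp only [cast_cast]
  have hcol : (fun a' => Kf A B i hddA f ⟨j-1, a',
      cast (congrArg B.basis (show i-j = i-1-(j-1) by omega)) b⟩)
      = hsig A hddA (j-1) (trE A (show j = j-1+1 by omega) (colf A B i f j b)) := by
    funext a'
    have hfun : (fun a'' : A.basis (j-1+1) => f ⟨j-1+1, a'',
        cast (congrArg B.basis (show i-1-(j-1) = i-(j-1+1) by omega))
          (cast (congrArg B.basis (show i-j = i-1-(j-1) by omega)) b)⟩)
        = trE A (show j = j-1+1 by omega) (colf A B i f j b) := by
      funext a''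
      rw [f_shift A B i f (show j-1+1 = j by omega)]
      simp only [cast_cast, cast_triv]
      rfl
    show hsig A hddA (j-1) _ a' = _
    rw [hfun]
  rw [hcol]
  have hid := congrFun (Pj_identity A hddA j (colf A B i f j b)) a
  show colf A B i f j b a = _
  rw [hid]
  simp only [Pi.add_apply]
  congr 1
  congr 1
  -- interchange step
  have hAd : A.d j (colf A B i f j b) = (-1:F)^j • (fun a'' : A.basis (j+1) =>
        B.d (i-j-1)
          (fun b' => f ⟨j+1, a'', cast (congrArg B.basis (show i-j-1 = i-(j+1) by omega)) b'⟩)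
          (cast (congrArg B.basis (show i-j = i-j-1+1 by omega)) b)) := by
    funext a''
    rw [show A.d j (colf A B i f j b) a'' = A.d j (fun a' => f ⟨j, a', b⟩) a'' from rfl,
      CC1 A B i f hf j a'' b]
    simp only [Pi.smul_apply, smul_eq_mul]
  rw [hAd, map_smul, Pi.smul_apply, smul_eq_mul]
  congr 1
  exact h2gen B (iA (j+1)) ((LinearMap.proj a).comp (hsig A hddA j)) (iB (i-j-1))
    (show i-1-j = i-j-1 by omega) (show i-j-1 = i-(j+1) by omega)
    (show i-j = i-j-1+1 by omega) (fun a'' c => f ⟨j+1, a'', c⟩) b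

include iA iB in
/-- branch lemma: decomposition of the harmonic part -/
lemma BR (f : (A.tensor B).basis i → F) (hf : (A.tensor B).d i f = 0) (j : ℤ)
    (hbr : (∀ z ∈ annB B i iB j, ctrR A B i iB f j z ∈ Cb A j)
         ∨ (∀ w ∈ annA A iA j, ctrL A B i iA f j w ∈ Cb B (i-j))) :
    ∃ (n : ℕ) (e : Fin n → (A.basis j → F)) (g : Fin n → (B.basis (i-j) → F)),
      (∀ m, A.d j (e m) = 0) ∧ (∀ m, g m ∈ Cb B (i-j)) ∧
      (∀ (a : A.basis j) (b : B.basis (i-j)),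
        Pj A hddA j (colf A B i f j b) a = ∑ m, e m a * g m b) := by
  classical
  letI := iA j
  set W : Submodule F (A.basis j → F) := LinearMap.range (Pj A hddA j) with hW
  set e0 : Module.Basis (Fin (Module.finrank F ↥W)) F ↥W := Module.finBasis F ↥W with he0
  set wm : Fin (Module.finrank F ↥W) → ((A.basis j → F) →ₗ[F] F) :=
    fun m => (e0.coord m) ∘ₗ (Pj A hddA j).rangeRestrict with hwm
  refine ⟨Module.finrank F ↥W, fun m => ((e0 m : ↥W) : A.basis j → F),
    fun m => fun b => wm m (colf A B i f j b), ?_, ?_, ?_⟩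
  · -- columns are cocycles
    intro m
    obtain ⟨u, hu⟩ := (e0 m).2
    show A.d j ((e0 m : ↥W) : A.basis j → F) = 0
    rw [← hu]
    exact Pj_d A hddA j u
  · -- the B-side coefficients are coboundaries
    have hwm_cb : ∀ (m) (u : A.basis j → F), u ∈ Cb A j → wm m u = 0 := by
      rintro m u hu
      have hp : Pj A hddA j u = 0 := by
        obtain ⟨mm, hmm, g0, rfl⟩ := hu
        exact Pj_cob' A hddA j hmm g0
      have h0 : (Pj A hddA j).rangeRestrict u = 0 := Subtype.ext hp
      show e0.coord m ((Pj A hddA j).rangeRestrict u) = 0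
      rw [h0, map_zero]
    intro m
    show (fun b => wm m (colf A B i f j b)) ∈ Cb B (i-j)
    rcases hbr with hL | hR
    · -- hard branch: right-contractions are coboundaries
      -- homotopy decomposition of the difference
      have hMLd : ∀ (y : B.basis (i-j)) (a : A.basis j),
          f ⟨j, a, y⟩ - Pj A hddA j (colf A B i f j y) a
          = A.d (j-1) (fun a' => Kf A B i hddA f ⟨j-1, a',
                cast (congrArg B.basis (show i-j = i-1-(j-1) by omega)) y⟩)
              (cast (congrArg A.basis (show j = j-1+1 by omega)) a)
          + (-1:F)^j * B.d (i-1-j) (fun b' => Kf A B i hddA f ⟨j, a, b'⟩)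
              (cast (congrArg B.basis (show i-j = i-1-j+1 by omega)) y) := by
        intro y a
        have h0 := ML A B i iA iB hddA f hf j a y
        rw [tensor_d_apply] at h0
        simp only [cast_cast] at h0
        linear_combination h0
      have hPjctr : ∀ z : B.basis (i-j) → F, Pj A hddA j (ctrR A B i iB f j z)
          = (letI := iB (i-j); ∑ y, z y • Pj A hddA j (colf A B i f j y)) := by
        intro z
        letI := iB (i-j)
        rw [ctrR_eq, map_sum]
        simp only [map_smul]
      have h1 : ∀ z ∈ annB B i iB j, Pj A hddA j (ctrR A B i iB f j z) = 0 := by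
        intro z hz
        letI := iB (i-j)
        have hdiff : ctrR A B i iB f j z - Pj A hddA j (ctrR A B i iB f j z) ∈ Cb A j := by
          have hKC : ctrR A B i iB f j z - Pj A hddA j (ctrR A B i iB f j z)
              = fun a => A.d (j-1)
                  (∑ y, z y • fun a' => Kf A B i hddA f ⟨j-1, a',
                    cast (congrArg B.basis (show i-j = i-1-(j-1) by omega)) y⟩)
                  (cast (congrArg A.basis (show j = j-1+1 by omega)) a) := by
            funext a
            rw [Pi.sub_apply, hPjctr, Finset.sum_apply]
            rw [show ctrR A B i iB f j z a = fsum (iB (i-j)) (fun y => f ⟨j,a,y⟩ * z y) from rfl,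
              fsum_eq]
            rw [← Finset.sum_sub_distrib]
            have hterm : ∀ y : B.basis (i-j),
                f ⟨j,a,y⟩ * z y - (z y • Pj A hddA j (colf A B i f j y)) a
                = z y * (A.d (j-1) (fun a' => Kf A B i hddA f ⟨j-1, a',
                      cast (congrArg B.basis (show i-j = i-1-(j-1) by omega)) y⟩)
                    (cast (congrArg A.basis (show j = j-1+1 by omega)) a))
                  + (fun yy => B.d (i-1-j) (fun b' => Kf A B i hddA f ⟨j, a, b'⟩)
                      (cast (congrArg B.basis (show i-j = i-1-j+1 by omega)) yy)) y
                    * ((-1:F)^j * z y) := by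
              intro y
              have h0 := hMLd y a
              simp only [Pi.smul_apply, smul_eq_mul]
              linear_combination z y * h0
            rw [Finset.sum_congr rfl (fun y _ => hterm y), Finset.sum_add_distrib]
            have hu2 : (fun yy => B.d (i-1-j) (fun b' => Kf A B i hddA f ⟨j, a, b'⟩)
                (cast (congrArg B.basis (show i-j = i-1-j+1 by omega)) yy)) ∈ Cb B (i-j) :=
              ⟨i-1-j, by omega, fun b' => Kf A B i hddA f ⟨j, a, b'⟩, rfl⟩
            have h2 := hz _ hu2
            rw [fsum_eq] at h2
            have hz2 : ∑ y : B.basis (i-j),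
                (fun yy => B.d (i-1-j) (fun b' => Kf A B i hddA f ⟨j, a, b'⟩)
                  (cast (congrArg B.basis (show i-j = i-1-j+1 by omega)) yy)) y
                * ((-1:F)^j * z y) = 0 := by
              rw [show (∑ y : B.basis (i-j),
                  (fun yy => B.d (i-1-j) (fun b' => Kf A B i hddA f ⟨j, a, b'⟩)
                    (cast (congrArg B.basis (show i-j = i-1-j+1 by omega)) yy)) y
                  * ((-1:F)^j * z y))
                = (-1:F)^j * ∑ y : B.basis (i-j),
                  (fun yy => B.d (i-1-j) (fun b' => Kf A B i hddA f ⟨j, a, b'⟩)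
                    (cast (congrArg B.basis (show i-j = i-1-j+1 by omega)) yy)) y * z y from by
                  rw [Finset.mul_sum]
                  exact Finset.sum_congr rfl fun y _ => by ring]
              rw [h2, mul_zero]
            rw [hz2, add_zero]
            rw [map_sum, Finset.sum_apply]
            exact Finset.sum_congr rfl fun y _ => by
              simp only [map_smul, Pi.smul_apply, smul_eq_mul]
          rw [hKC]
          exact ⟨j-1, by omega, _, rfl⟩
        have hmem : Pj A hddA j (ctrR A B i iB f j z) ∈ Cb A j := by
          have h2 := Submodule.sub_mem _ (hL z hz) hdiff
          rwa [sub_sub_cancel] at h2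
        exact Pj_kills A hddA j _ hmem
      have hrow : ∀ a : A.basis j,
          (fun y => Pj A hddA j (colf A B i f j y) a) ∈ Cb B (i-j) := by
        intro a
        apply DA (iB (i-j))
        intro z hz
        have h0 := congrFun (h1 z hz) a
        letI := iB (i-j)
        rw [fsum_eq]
        rw [hPjctr] at h0
        rw [Finset.sum_apply] at h0
        simp only [Pi.zero_apply] at h0
        refine Eq.trans (Finset.sum_congr rfl fun y _ => ?_) h0
        simp only [Pi.smul_apply, smul_eq_mul]
        ring
      have hswap : ∀ u, wm m (Pj A hddA j u) = wm m u := by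
        intro u
        show e0.coord m ((Pj A hddA j).rangeRestrict (Pj A hddA j u))
          = e0.coord m ((Pj A hddA j).rangeRestrict u)
        congr 1
        exact Subtype.ext (Pj_idem A hddA j u)
      have hdecomp : (fun y => wm m (colf A B i f j y))
          = ∑ x : A.basis j, (wm m (Pi.single x 1))
              • (fun y => Pj A hddA j (colf A B i f j y) x) := by
        funext y
        rw [Finset.sum_apply]
        rw [← hswap (colf A B i f j y), FE (wm m) (Pj A hddA j (colf A B i f j y))]
        exact Finset.sum_congr rfl fun x _ => by
          simp only [Pi.smul_apply, smul_eq_mul]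
          ring
      rw [hdecomp]
      exact Submodule.sum_mem _ (fun x _ => Submodule.smul_mem _ _ (hrow x))
    · -- easy branch: left-contractions are coboundaries
      have hann : (fun x => wm m (Pi.single x 1)) ∈ annA A iA j := by
        intro u hu
        rw [fsum_eq]
        rw [show (∑ x, u x * wm m (Pi.single x 1)) = wm m u from (FE (wm m) u).symm]
        exact hwm_cb m u hu
      have hmem := hR _ hann
      have hctr : ctrL A B i iA f j (fun x => wm m (Pi.single x 1))
          = fun b => wm m (colf A B i f j b) := by
        funext y
        show fsum (iA j) (fun x => wm m (Pi.single x 1) * f ⟨j, x, y⟩)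
          = wm m (colf A B i f j y)
        rw [fsum_eq, FE (wm m) (colf A B i f j y)]
        exact Finset.sum_congr rfl fun x _ => mul_comm _ _
      rwa [hctr] at hmem
  · -- reconstruction
    intro a b
    have hv : Pj A hddA j (colf A B i f j b) ∈ W := ⟨colf A B i f j b, rfl⟩
    have hs := congrArg (fun t : ↥W => (t : A.basis j → F) a)
      (Module.Basis.sum_repr e0 ⟨Pj A hddA j (colf A B i f j b), hv⟩)
    simp only [AddSubmonoidClass.coe_finset_sum, Finset.sum_apply, SetLike.val_smul,
      Pi.smul_apply, smul_eq_mul] at hs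
    have hwmv : ∀ m, wm m (colf A B i f j b)
        = e0.repr ⟨Pj A hddA j (colf A B i f j b), hv⟩ m := by
      intro m
      show e0.coord m ((Pj A hddA j).rangeRestrict (colf A B i f j b)) = _
      rw [Module.Basis.coord_apply]
      rfl
    rw [← hs]
    exact Finset.sum_congr rfl fun m _ => by
      show _ = ((e0 m : ↥W) : A.basis j → F) a * wm m (colf A B i f j b)
      rw [hwmv m]
      ring

lemma cast_sigma {n n' : ℤ} (h : n = n') (j : ℤ) (a : A.basis j) (b : B.basis (n-j)) :
    cast (congrArg (A.tensor B).basis h) (⟨j, a, b⟩ : (A.tensor B).basis n)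
      = (⟨j, a, cast (congrArg B.basis (show n-j = n'-j by omega)) b⟩
          : (A.tensor B).basis n') := by
  subst h
  rfl

lemma sq_one (j : ℤ) : (-1:F)^j * (-1:F)^j = 1 := by
  rw [← zpow_add₀ (by norm_num : (-1:F) ≠ 0)]
  exact Even.neg_one_zpow ⟨j, by ring⟩

include iA iB hddA in
/-- the core (Künneth-type) lemma -/
lemma core (f : (A.tensor B).basis i → F) (hf : (A.tensor B).d i f = 0)
    (hbr : ∀ j : ℤ, (∀ z ∈ annB B i iB j, ctrR A B i iB f j z ∈ Cb A j)
         ∨ (∀ w ∈ annA A iA j, ctrL A B i iA f j w ∈ Cb B (i-j))) :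
    f ∈ (A.tensor B).cobounds i := by
  classical
  have hBR := fun j => BR A B i iA iB hddA f hf j (hbr j)
  choose n e g he hg hrec using hBR
  have hgc : ∀ (j : ℤ) (m : Fin (n j)), ∃ c : B.basis (i-j-1) → F,
      g j m = fun y => B.d (i-j-1) c
        (cast (congrArg B.basis (show i-j = i-j-1+1 by omega)) y) := by
    intro j m
    obtain ⟨mm, hmm, c, hcc⟩ := hg j m
    obtain rfl : mm = i-j-1 := by omega
    exact ⟨c, hcc⟩
  choose c hc using hgc
  refine ⟨fun x => Kf A B i hddA f x + (-1:F)^x.1 *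
      (∑ m : Fin (n x.1), e x.1 m x.2.1 * c x.1 m
        (cast (congrArg B.basis (show i-1-x.1 = i-x.1-1 by omega)) x.2.2)), ?_⟩
  rintro ⟨j, a, b⟩
  rw [cast_sigma A B (show i = i-1+1 by omega) j a b]
  rw [tensor_d_apply]
  simp only [cast_cast]
  -- the A-side term
  have hA : A.d (j-1) (fun a' => Kf A B i hddA f ⟨j-1, a',
        cast (congrArg B.basis (show i-j = i-1-(j-1) by omega)) b⟩ + (-1:F)^(j-1) *
        (∑ m : Fin (n (j-1)), e (j-1) m a' * c (j-1) m
          (cast (congrArg B.basis (show i-j = i-(j-1)-1 by omega)) b)))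
      (cast (congrArg A.basis (show j = j-1+1 by omega)) a)
      = A.d (j-1) (fun a' => Kf A B i hddA f ⟨j-1, a',
          cast (congrArg B.basis (show i-j = i-1-(j-1) by omega)) b⟩)
        (cast (congrArg A.basis (show j = j-1+1 by omega)) a) := by
    have hsplit : (fun a' => Kf A B i hddA f ⟨j-1, a',
          cast (congrArg B.basis (show i-j = i-1-(j-1) by omega)) b⟩ + (-1:F)^(j-1) *
          (∑ m : Fin (n (j-1)), e (j-1) m a' * c (j-1) m
            (cast (congrArg B.basis (show i-j = i-(j-1)-1 by omega)) b)))
        = (fun a' => Kf A B i hddA f ⟨j-1, a',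
            cast (congrArg B.basis (show i-j = i-1-(j-1) by omega)) b⟩)
          + ((-1:F)^(j-1) • ∑ m : Fin (n (j-1)),
              (c (j-1) m (cast (congrArg B.basis (show i-j = i-(j-1)-1 by omega)) b))
                • e (j-1) m) := by
      funext a'
      simp only [Pi.add_apply, Pi.smul_apply, Finset.sum_apply, smul_eq_mul]
      congr 1
      rw [Finset.mul_sum, Finset.mul_sum]
      refine Finset.sum_congr rfl fun m _ => ?_
      ring
    rw [hsplit, map_add, map_smul, map_sum]
    have hz : (∑ m : Fin (n (j-1)),
        A.d (j-1) ((c (j-1) m (cast (congrArg B.basis (show i-j = i-(j-1)-1 by omega)) b))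
          • e (j-1) m)) = 0 := by
      refine Finset.sum_eq_zero fun m _ => ?_
      rw [map_smul, he (j-1) m, smul_zero]
    rw [hz, smul_zero, add_zero]
  rw [hA]
  -- the B-side term
  have hgb : ∀ m : Fin (n j), B.d (i-1-j)
      (fun b' => c j m (cast (congrArg B.basis (show i-1-j = i-j-1 by omega)) b'))
      (cast (congrArg B.basis (show i-j = i-1-j+1 by omega)) b) = g j m b := by
    intro m
    have hd := dB_shiftgen B (show i-1-j = i-j-1 by omega)
      (G := fun b' => c j m (cast (congrArg B.basis (show i-1-j = i-j-1 by omega)) b'))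
      (G' := c j m)
      (hG := fun y => congrArg (c j m) (Eq.symm (by simp only [cast_cast, cast_triv])))
      (hs := show i-j = i-1-j+1 by omega) (x := b)
    rw [hd]
    exact (congrFun (hc j m) b).symm
  have hB : B.d (i-1-j) (fun b' => Kf A B i hddA f ⟨j, a, b'⟩ + (-1:F)^j *
        (∑ m : Fin (n j), e j m a * c j m
          (cast (congrArg B.basis (show i-1-j = i-j-1 by omega)) b')))
      (cast (congrArg B.basis (show i-j = i-1-j+1 by omega)) b)
      = B.d (i-1-j) (fun b' => Kf A B i hddA f ⟨j, a, b'⟩)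
          (cast (congrArg B.basis (show i-j = i-1-j+1 by omega)) b)
        + (-1:F)^j * ∑ m : Fin (n j), e j m a * g j m b := by
    have hsplit : (fun b' => Kf A B i hddA f ⟨j, a, b'⟩ + (-1:F)^j *
          (∑ m : Fin (n j), e j m a * c j m
            (cast (congrArg B.basis (show i-1-j = i-j-1 by omega)) b')))
        = (fun b' => Kf A B i hddA f ⟨j, a, b'⟩)
          + ((-1:F)^j • ∑ m : Fin (n j), (e j m a) •
              fun b' => c j m (cast (congrArg B.basis (show i-1-j = i-j-1 by omega)) b')) := by
      funext b'
      simp only [Pi.add_apply, Pi.smul_apply, Finset.sum_apply, smul_eq_mul]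
    rw [hsplit, map_add, map_smul, map_sum]
    simp only [Pi.add_apply, Pi.smul_apply, smul_eq_mul, Finset.sum_apply]
    congr 1
    congr 1
    refine Finset.sum_congr rfl fun m _ => ?_
    rw [map_smul]
    simp only [Pi.smul_apply, smul_eq_mul]
    rw [hgb m]
  rw [hB]
  -- conclude with the homotopy identity
  have hML := ML A B i iA iB hddA f hf j a b
  rw [tensor_d_apply] at hML
  simp only [cast_cast] at hML
  have hrec0 := hrec j a b
  have hsq := sq_one (F := F) j
  linear_combination hML + hrec0 - (∑ m : Fin (n j), e j m a * g j m b) * hsq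

lemma sigma_fst_inj {j : ℤ} {a a' : A.basis j} {y y' : B.basis (i-j)}
    (hh : (⟨j, a, y⟩ : (A.tensor B).basis i) = ⟨j, a', y'⟩) : a = a' ∧ y = y' := by
  have hh' : (Sigma.mk j (a, y) : Σ k : ℤ, A.basis k × B.basis (i-k))
      = Sigma.mk j (a', y') := hh
  rw [Sigma.mk.inj_iff] at hh'
  have h3 := eq_of_heq hh'.2
  exact ⟨congrArg Prod.fst h3, congrArg Prod.snd h3⟩

lemma wt_ctrR (f : (A.tensor B).basis i → F) (j : ℤ) (z : B.basis (i-j) → F) :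
    PreBCC.wt (ctrR A B i iB f j z) ≤ PreBCC.wt f := by
  classical
  unfold PreBCC.wt
  rcases isEmpty_or_nonempty (B.basis (i-j)) with hE | hNE
  · have hempty : {a | ctrR A B i iB f j z a ≠ 0} = ∅ := by
      ext a
      simp only [Set.mem_setOf_eq, Set.mem_empty_iff_false, iff_false, not_not]
      show fsum (iB (i-j)) _ = 0
      letI := iB (i-j)
      rw [fsum_eq]
      simp
    rw [hempty, Set.encard_empty]
    exact zero_le ..
  · obtain ⟨y0⟩ := hNE
    set φ : A.basis j → (A.tensor B).basis i := fun a =>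
      if h : ∃ y, f ⟨j, a, y⟩ * z y ≠ 0 then ⟨j, a, h.choose⟩ else ⟨j, a, y0⟩ with hφ
    apply Set.encard_le_encard_of_injOn (f := φ)
    · intro a ha
      have hex : ∃ y, f ⟨j, a, y⟩ * z y ≠ 0 := by
        by_contra hno
        push_neg at hno
        apply ha
        show fsum (iB (i-j)) _ = 0
        letI := iB (i-j)
        rw [fsum_eq]
        exact Finset.sum_eq_zero fun y _ => hno y
      show f (φ a) ≠ 0
      rw [show φ a = ⟨j, a, hex.choose⟩ from dif_pos hex]
      show f ⟨j, a, hex.choose⟩ ≠ 0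
      exact left_ne_zero_of_mul hex.choose_spec
    · intro a _ a' _ hda
      have e1 : ∀ a, ∃ y, φ a = ⟨j, a, y⟩ := fun a => by
        by_cases h : ∃ y, f ⟨j, a, y⟩ * z y ≠ 0
        · exact ⟨_, dif_pos h⟩
        · exact ⟨_, dif_neg h⟩
      have hda' : φ a = φ a' := hda
      obtain ⟨y1, hy1⟩ := e1 a
      obtain ⟨y2, hy2⟩ := e1 a'
      rw [hy1, hy2] at hda'
      exact (sigma_fst_inj A B i hda').1

lemma wt_ctrL (f : (A.tensor B).basis i → F) (j : ℤ) (w : A.basis j → F) :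
    PreBCC.wt (ctrL A B i iA f j w) ≤ PreBCC.wt f := by
  classical
  unfold PreBCC.wt
  rcases isEmpty_or_nonempty (A.basis j) with hE | hNE
  · have hempty : {y | ctrL A B i iA f j w y ≠ 0} = ∅ := by
      ext y
      simp only [Set.mem_setOf_eq, Set.mem_empty_iff_false, iff_false, not_not]
      show fsum (iA j) _ = 0
      letI := iA j
      rw [fsum_eq]
      simp
    rw [hempty, Set.encard_empty]
    exact zero_le ..
  · obtain ⟨x0⟩ := hNE
    set φ : B.basis (i-j) → (A.tensor B).basis i := fun y =>
      if h : ∃ x, w x * f ⟨j, x, y⟩ ≠ 0 then ⟨j, h.choose, y⟩ else ⟨j, x0, y⟩ with hφ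
    apply Set.encard_le_encard_of_injOn (f := φ)
    · intro y hy
      have hex : ∃ x, w x * f ⟨j, x, y⟩ ≠ 0 := by
        by_contra hno
        push_neg at hno
        apply hy
        show fsum (iA j) _ = 0
        letI := iA j
        rw [fsum_eq]
        exact Finset.sum_eq_zero fun x _ => hno x
      show f (φ y) ≠ 0
      rw [show φ y = ⟨j, hex.choose, y⟩ from dif_pos hex]
      show f ⟨j, hex.choose, y⟩ ≠ 0
      exact right_ne_zero_of_mul hex.choose_spec
    · intro y _ y' _ hda
      have e1 : ∀ y, ∃ x, φ y = ⟨j, x, y⟩ := fun y => by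
        by_cases h : ∃ x, w x * f ⟨j, x, y⟩ ≠ 0
        · exact ⟨_, dif_pos h⟩
        · exact ⟨_, dif_neg h⟩
      have hda' : φ y = φ y' := hda
      obtain ⟨x1, hx1⟩ := e1 y
      obtain ⟨x2, hx2⟩ := e1 y'
      rw [hx1, hx2] at hda'
      exact (sigma_fst_inj A B i hda').2

end Stmt7T

theorem stmt7' (F : Type) [Field F] (A B : PreBCC F)
    (hddA : ∀ (i : ℤ) (f : A.basis i → F), A.d (i + 1) (A.d i f) = 0)
    (hAfin : ∀ i, Finite (A.basis i)) (hBfin : ∀ i, Finite (B.basis i))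
    (i : ℤ) :
    ⨅ j : ℤ, max (A.dcosys j) (B.dcosys (i - j)) ≤ (A.tensor B).dcosys i := by
  classical
  have iA : ∀ k : ℤ, Fintype (A.basis k) := fun k => Fintype.ofFinite _
  have iB : ∀ k : ℤ, Fintype (B.basis k) := fun k => Fintype.ofFinite _
  refine le_sInf ?_
  rintro v ⟨f, ⟨hfz, hfb⟩, rfl⟩
  have hfz' : (A.tensor B).d i f = 0 := hfz
  have hcon : ¬ ∀ j : ℤ,
      (∀ z ∈ Stmt7T.annB B i iB j, Stmt7T.ctrR A B i iB f j z ∈ Stmt7Aux3.Cb A j)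
      ∨ (∀ w ∈ Stmt7T.annA A iA j, Stmt7T.ctrL A B i iA f j w ∈ Stmt7Aux3.Cb B (i-j)) :=
    fun h => hfb (Stmt7T.core A B i iA iB hddA f hfz' h)
  push_neg at hcon
  obtain ⟨j, hP, hQ⟩ := hcon
  obtain ⟨z, hz, hznot⟩ := hP
  obtain ⟨w, hw, hwnot⟩ := hQ
  refine iInf_le_of_le j (max_le ?_ ?_)
  · refine le_trans (sInf_le ?_) (Stmt7T.wt_ctrR A B i iB f j z)
    refine ⟨Stmt7T.ctrR A B i iB f j z, ⟨?_, ?_⟩, rfl⟩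
    · exact Stmt7T.ctrR_cocycle A B i iB f hfz' j z hz
    · exact fun hmem => hznot ((Stmt7Aux3.cobounds_iff A j _).mp hmem)
  · refine le_trans (sInf_le ?_) (Stmt7T.wt_ctrL A B i iA f j w)
    refine ⟨Stmt7T.ctrL A B i iA f j w, ⟨?_, ?_⟩, rfl⟩
    · exact Stmt7T.ctrL_cocycle A B i iA f hfz' j w hw
    · exact fun hmem => hwnot ((Stmt7Aux3.cobounds_iff B (i-j) _).mp hmem)

/-- cosystolic distance of tensor products; Lemma 3.25.  Let `A` and `B`
be finite based cochain complexes over a finite field `F` (each level is a finite set, only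
finitely many levels are nonempty, and the coboundary maps square to zero).  Then for every
`i`, the `i`-cosystolic distance of the tensor product `C = A ⊗ B` satisfies
`d^i(C) ≥ min_{j ∈ ℤ} max {d^j(A), d^{i-j}(B)}`, where the distances take the value `⊤`
when the corresponding set `Z \ B` is empty. -/
theorem stmt7 (F : Type) [Field F] [Fintype F] (A B : PreBCC F)
    (hddA : ∀ (i : ℤ) (f : A.basis i → F), A.d (i + 1) (A.d i f) = 0)
    (hddB : ∀ (i : ℤ) (f : B.basis i → F), B.d (i + 1) (B.d i f) = 0)
    (hAfin : ∀ i, Finite (A.basis i)) (hBfin : ∀ i, Finite (B.basis i))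
    (hAsupp : {i : ℤ | Nonempty (A.basis i)}.Finite)
    (hBsupp : {i : ℤ | Nonempty (B.basis i)}.Finite)
    (i : ℤ) :
    ⨅ j : ℤ, max (A.dcosys j) (B.dcosys (i - j)) ≤ (A.tensor B).dcosys i :=
  stmt7' F A B hddA hAfin hBfin i
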